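/- If a semigroup S satisfies the identities (x₁²x₂²⋯xₙ²)² = (x₁²x₂²⋯xₙ²)³ for all n ≥ 2, then the subsemigroup of S generated by all idempotents of S is combinatorial, i.e., every subgroup contained in it is a singleton. -/

import Mathlib

/-- The product `x₁² x₂² ⋯ xₙ²` of the squares of `n = m + 2 ≥ 2` elements of a semigroup. -/
def sqProd {S : Type*} [Mul S] {m : ℕ} (f : Fin (m + 2) → S) : S :=
  List.foldl (· * ·) (f 0 * f 0) (List.ofFn fun i : Fin (m + 1) => f i.succ * f i.succ)

/-- A subset `G` of a semigroup is a subgroup if it is nonempty, closed under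
multiplication, and forms a group under the induced operation. -/
def IsSubgroupSet {S : Type*} [Mul S] (G : Set S) : Prop :=
  G.Nonempty ∧ (∀ x ∈ G, ∀ y ∈ G, x * y ∈ G) ∧
    ∃ e ∈ G, (∀ g ∈ G, g * e = g ∧ e * g = g) ∧ ∀ g ∈ G, ∃ h ∈ G, g * h = e ∧ h * g = e

private lemma foldl_mul_assoc' {S : Type*} [Semigroup S] :
    ∀ (l : List S) (x b : S), List.foldl (· * ·) (x * b) l = x * List.foldl (· * ·) b l := by
  intro l
  induction l with
  | nil => intro x b; rfl
  | cons c t ih => intro x b; simp only [List.foldl_cons, mul_assoc]; exact ih x (b * c)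

private lemma sq_eq_cube_of_idem_prod {S : Type*} [Semigroup S]
    (h : ∀ (m : ℕ) (f : Fin (m + 2) → S),
      sqProd f * sqProd f = sqProd f * sqProd f * sqProd f) :
    ∀ (a : S) (l : List S), (∀ c ∈ a :: l, c * c = c) →
      (List.foldl (· * ·) a l) * (List.foldl (· * ·) a l) =
      (List.foldl (· * ·) a l) * (List.foldl (· * ·) a l) * (List.foldl (· * ·) a l) := by
  intro a l hidem
  match l with
  | [] =>
      have ha : a * a = a := hidem a (by simp)
      simp [ha]
  | b :: rest =>
      set L : List S := a :: b :: rest with hL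
      have hlen : L.length = rest.length + 2 := by simp [hL]
      let f : Fin (rest.length + 2) → S := fun i => L.get (Fin.cast hlen.symm i)
      have hidem' : ∀ i, f i * f i = f i := by
        intro i
        exact hidem _ (List.get_mem L _)
      have h0 : f 0 = a := rfl
      have hofn : (List.ofFn fun i : Fin (rest.length + 1) => f i.succ * f i.succ) = b :: rest := by
        rw [show (fun i : Fin (rest.length + 1) => f i.succ * f i.succ)
            = fun i : Fin (rest.length + 1) => f i.succ from funext fun i => hidem' i.succ]
        apply List.ext_getElem (by simp)
        intro j h1 h2
        simp [f, hL, List.getElem_ofFn, List.get_eq_getElem]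
      have hs : sqProd f = List.foldl (· * ·) a (b :: rest) := by
        unfold sqProd
        rw [hofn, hidem' 0, h0]
      rw [← hs]
      exact h rest.length f

private lemma sq_eq_cube_of_mem_closure {S : Type*} [Semigroup S]
    (h : ∀ (m : ℕ) (f : Fin (m + 2) → S),
      sqProd f * sqProd f = sqProd f * sqProd f * sqProd f)
    {x : S} (hx : x ∈ (Subsemigroup.closure {e : S | e * e = e} : Subsemigroup S)) :
    x * x = x * x * x := by
  have key : ∃ (a : S) (l : List S), (∀ c ∈ a :: l, c * c = c) ∧
      x = List.foldl (· * ·) a l := by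
    induction hx using Subsemigroup.closure_induction with
    | mem y hy => exact ⟨y, [], by simpa using hy, rfl⟩
    | mul y z hy hz ihy ihz =>
      obtain ⟨a, l, hl, rfl⟩ := ihy
      obtain ⟨b, m, hm, rfl⟩ := ihz
      refine ⟨a, l ++ b :: m, ?_, ?_⟩
      · intro c hc
        rcases List.mem_cons.1 hc with rfl | hc
        · exact hl c (by simp)
        · rcases List.mem_append.1 hc with hc | hc
          · exact hl c (by simp [hc])
          · exact hm c hc
      · rw [List.foldl_append, List.foldl_cons]
        exact (foldl_mul_assoc' m _ b).symm
  obtain ⟨a, l, hl, rfl⟩ := key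
  exact sq_eq_cube_of_idem_prod h a l hl


/-- If a semigroup `S` satisfies the identities `(x₁²x₂²⋯xₙ²)² = (x₁²x₂²⋯xₙ²)³` for all
`n ≥ 2`, then the subsemigroup of `S` generated by all idempotents is combinatorial:
every subgroup contained in it is a singleton. -/
theorem idempotent_subsemigroup_combinatorial {S : Type*} [Semigroup S]
    (h : ∀ (m : ℕ) (f : Fin (m + 2) → S),
      sqProd f * sqProd f = sqProd f * sqProd f * sqProd f)
    (G : Set S) (hG : IsSubgroupSet G)
    (hsub : G ⊆ (Subsemigroup.closure {e : S | e * e = e} : Subsemigroup S)) :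
    G.Subsingleton := by
  obtain ⟨-, hmul, e, heG, hid, hinv⟩ := hG
  have key : ∀ g ∈ G, g = e := by
    intro g hg
    obtain ⟨k, hkG, hgk, hkg⟩ := hinv g hg
    have hsq : g * g = g * g * g := sq_eq_cube_of_mem_closure h (hsub hg)
    have c1 : g * g * (k * k) = e := by
      rw [show g * g * (k * k) = g * (g * k) * k by simp [mul_assoc], hgk,
        (hid g hg).1, hgk]
    have c2 : g * g * g * (k * k) = g := by
      rw [show g * g * g * (k * k) = g * g * (g * k) * k by simp [mul_assoc], hgk,
        (hid (g * g) (hmul g hg g hg)).1, mul_assoc, hgk, (hid g hg).1]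
    rw [hsq, c2] at c1
    exact c1
  intro a ha b hb
  rw [key a ha, key b hb]
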